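/- Let (Ω, F, P) be a probability space with P a probability measure on a finite (or countable) sample space, and let X : Ω → 𝒳, Z : Ω → 𝒵, and Y, Ŷ : Ω → {0,1} be random variables with 𝒳, 𝒵 finite. Fix j, k ∈ 𝒵 and a nonempty set S ⊆ 𝒳 such that for all x ∈ S and z ∈ {j, k}, P(X = x, Y = 1, Ŷ = 1, Z = z) > 0 and P(X = x, Y = 1, Ŷ = 1, Z = z) / P(Ŷ = 1, Z = z) > 0 (i.e., the relevant joint events have positive probability). For z ∈ {j, k} and x ∈ S define c_z(x) = [ P(X = x | Z = z) · P(Y = 1 | Ŷ = 1, Z = z) ] / [ P(X = x | Ŷ = 1, Z = z) · P(Y = 1 | Z = z) ]. Suppose that for every x ∈ S, P(Ŷ = 1 | X = x, Z = j) ≤ P(Ŷ = 1 | X = x, Z = k). Then for every x ∈ S, P(Ŷ = 1 | Y = 1, Z = j) ≤ ( c_j(x) / c_k(x) ) · P(Ŷ = 1 | Y = 1, Z = k); equivalently, P(Ŷ = 1 | Y = 1, Z = j) / P(Ŷ = 1 | Y = 1, Z = k) ≤ inf over x ∈ S of c_j(x) / c_k(x). -/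

import Mathlib

/- Probability of the event `A` under the probability mass function `P` on a finite
sample space `Ω`. -/
open Classical in
noncomputable def pr {Ω : Type*} [Fintype Ω] (P : Ω → ℝ) (A : Ω → Prop) : ℝ :=
  ∑ ω : Ω, if A ω then P ω else 0

/-- Conditional probability `P(B | A)` under the probability mass function `P`. -/
noncomputable def condPr {Ω : Type*} [Fintype Ω] (P : Ω → ℝ) (A B : Ω → Prop) : ℝ :=
  pr P (fun ω => A ω ∧ B ω) / pr P A

/-- The coefficient
`c_z(x) = (P(X=x|Z=z) · P(Y=1|Ŷ=1,Z=z)) / (P(X=x|Ŷ=1,Z=z) · P(Y=1|Z=z))`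
from Lemma 4. -/
noncomputable def ccoef {Ω 𝒳 𝒵 : Type*} [Fintype Ω]
    (P : Ω → ℝ) (X : Ω → 𝒳) (Z : Ω → 𝒵) (Y Yhat : Ω → Fin 2) (z : 𝒵) (x : 𝒳) : ℝ :=
  (condPr P (fun ω => Z ω = z) (fun ω => X ω = x)
      * condPr P (fun ω => Yhat ω = 1 ∧ Z ω = z) (fun ω => Y ω = 1))
    / (condPr P (fun ω => Yhat ω = 1 ∧ Z ω = z) (fun ω => X ω = x)
      * condPr P (fun ω => Z ω = z) (fun ω => Y ω = 1))

open Classical in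
lemma pr_mono' {Ω : Type*} [Fintype Ω] (P : Ω → ℝ) (hP0 : ∀ ω, 0 ≤ P ω)
    {A B : Ω → Prop} (h : ∀ ω, A ω → B ω) : pr P A ≤ pr P B := by
  unfold pr
  apply Finset.sum_le_sum
  intro ω _
  by_cases hA : A ω
  · simp [hA, h ω hA]
  · simp only [hA, if_false]
    split_ifs
    · exact hP0 ω
    · exact le_refl 0

open Classical in
lemma pr_congr' {Ω : Type*} [Fintype Ω] (P : Ω → ℝ)
    {A B : Ω → Prop} (h : ∀ ω, A ω ↔ B ω) : pr P A = pr P B := by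
  unfold pr
  exact Finset.sum_congr rfl (fun ω _ => by simp [h ω])

lemma key_identity {Ω 𝒳 𝒵 : Type*} [Fintype Ω]
    (P : Ω → ℝ) (hP0 : ∀ ω, 0 ≤ P ω)
    (X : Ω → 𝒳) (Z : Ω → 𝒵) (Y Yhat : Ω → Fin 2) (z : 𝒵) (x : 𝒳)
    (h : 0 < pr P (fun ω => X ω = x ∧ Y ω = 1 ∧ Yhat ω = 1 ∧ Z ω = z)) :
    0 < ccoef P X Z Y Yhat z x ∧
    condPr P (fun ω => Y ω = 1 ∧ Z ω = z) (fun ω => Yhat ω = 1)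
      = ccoef P X Z Y Yhat z x
        * condPr P (fun ω => X ω = x ∧ Z ω = z) (fun ω => Yhat ω = 1) := by
  set a := pr P (fun ω => Y ω = 1 ∧ Z ω = z ∧ Yhat ω = 1) with ha_def
  set b := pr P (fun ω => Y ω = 1 ∧ Z ω = z) with hb_def
  set c := pr P (fun ω => X ω = x ∧ Z ω = z) with hc_def
  set d := pr P (fun ω => Z ω = z) with hd_def
  set e := pr P (fun ω => Yhat ω = 1 ∧ Z ω = z) with he_def
  set f := pr P (fun ω => X ω = x ∧ Z ω = z ∧ Yhat ω = 1) with hf_def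
  have ha : 0 < a := lt_of_lt_of_le h (pr_mono' P hP0 (by tauto))
  have hb : 0 < b := lt_of_lt_of_le h (pr_mono' P hP0 (by tauto))
  have hc : 0 < c := lt_of_lt_of_le h (pr_mono' P hP0 (by tauto))
  have hd : 0 < d := lt_of_lt_of_le h (pr_mono' P hP0 (by tauto))
  have he : 0 < e := lt_of_lt_of_le h (pr_mono' P hP0 (by tauto))
  have hf : 0 < f := lt_of_lt_of_le h (pr_mono' P hP0 (by tauto))
  have e1 : pr P (fun ω => (Y ω = 1 ∧ Z ω = z) ∧ Yhat ω = 1) = a :=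
    pr_congr' P (by tauto)
  have e2 : pr P (fun ω => Z ω = z ∧ X ω = x) = c := pr_congr' P (by tauto)
  have e3 : pr P (fun ω => (Yhat ω = 1 ∧ Z ω = z) ∧ Y ω = 1) = a :=
    pr_congr' P (by tauto)
  have e4 : pr P (fun ω => (Yhat ω = 1 ∧ Z ω = z) ∧ X ω = x) = f :=
    pr_congr' P (by tauto)
  have e5 : pr P (fun ω => Z ω = z ∧ Y ω = 1) = b := pr_congr' P (by tauto)
  have e6 : pr P (fun ω => (X ω = x ∧ Z ω = z) ∧ Yhat ω = 1) = f :=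
    pr_congr' P (by tauto)
  have hcc : ccoef P X Z Y Yhat z x = (c / d * (a / e)) / (f / e * (b / d)) := by
    unfold ccoef condPr
    rw [e2, e3, e4, e5]
  constructor
  · rw [hcc]; positivity
  · unfold condPr
    rw [e1, e6, hcc, ← hb_def, ← hc_def]
    field_simp

/-- Lemma 4: for a binary classifier `Ŷ` with true label `Y` that is monotonic between
the groups `Z = j` and `Z = k` on a set `S` of feature values whose relevant joint events
have positive probability, for every `x ∈ S` we have
`P(Ŷ=1|Y=1,Z=j) ≤ (c_j(x)/c_k(x)) · P(Ŷ=1|Y=1,Z=k)`, i.e. the one-sided equal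
opportunity ratio `P(Ŷ=1|Y=1,Z=j)/P(Ŷ=1|Y=1,Z=k)` is bounded by the infimum over
`x ∈ S` of `c_j(x)/c_k(x)`. -/

theorem binary_classifier_one_sided_equal_opportunity_bound
    {Ω 𝒳 𝒵 : Type*} [Fintype Ω] [Fintype 𝒳] [Fintype 𝒵]
    (P : Ω → ℝ) (hP0 : ∀ ω, 0 ≤ P ω) (hP1 : ∑ ω : Ω, P ω = 1)
    (X : Ω → 𝒳) (Z : Ω → 𝒵) (Y Yhat : Ω → Fin 2)
    (j k : 𝒵) (S : Finset 𝒳) (hS : S.Nonempty)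
    (hposj : ∀ x ∈ S,
      0 < pr P (fun ω => X ω = x ∧ Y ω = 1 ∧ Yhat ω = 1 ∧ Z ω = j)
      ∧ 0 < pr P (fun ω => X ω = x ∧ Y ω = 1 ∧ Yhat ω = 1 ∧ Z ω = j)
            / pr P (fun ω => Yhat ω = 1 ∧ Z ω = j))
    (hposk : ∀ x ∈ S,
      0 < pr P (fun ω => X ω = x ∧ Y ω = 1 ∧ Yhat ω = 1 ∧ Z ω = k)
      ∧ 0 < pr P (fun ω => X ω = x ∧ Y ω = 1 ∧ Yhat ω = 1 ∧ Z ω = k)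
            / pr P (fun ω => Yhat ω = 1 ∧ Z ω = k))
    (hmono : ∀ x ∈ S,
      condPr P (fun ω => X ω = x ∧ Z ω = j) (fun ω => Yhat ω = 1)
        ≤ condPr P (fun ω => X ω = x ∧ Z ω = k) (fun ω => Yhat ω = 1)) :
    ∀ x ∈ S,
      condPr P (fun ω => Y ω = 1 ∧ Z ω = j) (fun ω => Yhat ω = 1)
        ≤ (ccoef P X Z Y Yhat j x / ccoef P X Z Y Yhat k x)
          * condPr P (fun ω => Y ω = 1 ∧ Z ω = k) (fun ω => Yhat ω = 1) := by
  intro x hx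
  obtain ⟨hcj, hej⟩ := key_identity P hP0 X Z Y Yhat j x (hposj x hx).1
  obtain ⟨hck, hek⟩ := key_identity P hP0 X Z Y Yhat k x (hposk x hx).1
  rw [hej, hek]
  have hid : (ccoef P X Z Y Yhat j x / ccoef P X Z Y Yhat k x)
      * (ccoef P X Z Y Yhat k x * condPr P (fun ω => X ω = x ∧ Z ω = k) (fun ω => Yhat ω = 1))
      = ccoef P X Z Y Yhat j x * condPr P (fun ω => X ω = x ∧ Z ω = k) (fun ω => Yhat ω = 1) := by
    field_simp
  rw [hid]
  exact mul_le_mul_of_nonneg_left (hmono x hx) (le_of_lt hcj)
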